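/- A rooted tree is path commuting if and only if it is spherically symmetric (i.e., every vertex in S_n has the same number of forward neighbors in S_{n+1}, for each n). -/

import Mathlib

open SimpleGraph Matrix

attribute [local instance] Classical.propDecidable

section AuxTreeLemmas


variable {V : Type*} {G : SimpleGraph V} {o : V}

/-- In an acyclic connected graph, adjacent vertices have distances to `o` differing by 1. -/
lemma tree_adj_dist (hc : G.Connected) (ht : G.IsAcyclic) {u v : V} (h : G.Adj u v) :
    G.dist o u + 1 = G.dist o v ∨ G.dist o v + 1 = G.dist o u := by
  have hd1 : G.dist u v = 1 := dist_eq_one_iff_adj.mpr h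
  have t1 : G.dist o v ≤ G.dist o u + 1 := by
    have := hc.dist_triangle (u := o) (v := u) (w := v); omega
  have t2 : G.dist o u ≤ G.dist o v + 1 := by
    have := hc.dist_triangle (u := o) (v := v) (w := u)
    have : G.dist v u = 1 := dist_eq_one_iff_adj.mpr h.symm
    have := hc.dist_triangle (u := o) (v := v) (w := u); omega
  have hne : G.dist o u ≠ G.dist o v := by
    intro he
    classical
    set n := G.dist o u with hn
    -- shortest path from o to u
    obtain ⟨p, hp, hpl⟩ := hc.exists_path_of_dist o u
    have hvs : v ∉ p.support := by
      intro hv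
      have h1 : G.dist o v ≤ (p.takeUntil v hv).length := dist_le _
      have h2 := Walk.length_takeUntil_le p hv
      have h3 : (p.takeUntil v hv).length = n := by omega
      have := p.take_spec hv
      have hlen : (p.takeUntil v hv).length + (p.dropUntil v hv).length = p.length := by
        rw [← Walk.length_append, this]
      have h4 : (p.dropUntil v hv).length = 0 := by omega
      have h5 := Walk.eq_of_length_eq_zero h4
      exact h.ne h5.symm
    have hq1 : (Walk.cons h.symm p.reverse).IsPath :=
      hp.reverse.cons (by rwa [Walk.support_reverse, List.mem_reverse])
    obtain ⟨q, hq, hql⟩ := hc.exists_path_of_dist v o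
    have huniq := ht.path_unique ⟨Walk.cons h.symm p.reverse, hq1⟩ ⟨q, hq⟩
    have hlen : (Walk.cons h.symm p.reverse).length = q.length :=
      congrArg (fun r : G.Path v o => (r : G.Walk v o).length) huniq
    rw [Walk.length_cons, Walk.length_reverse] at hlen
    rw [SimpleGraph.dist_comm] at hql
    omega
  omega

/-- Existence of a parent. -/
lemma parent_exists (hc : G.Connected) {v : V} (h : G.dist o v ≠ 0) :
    ∃ u, G.Adj v u ∧ G.dist o u + 1 = G.dist o v := by
  obtain ⟨p, hp, hpl⟩ := hc.exists_path_of_dist o v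
  have hnil : ¬ p.reverse.Nil := by
    rw [Walk.nil_iff_length_eq, Walk.length_reverse]; omega
  refine ⟨p.reverse.getVert 1, Walk.adj_snd hnil, ?_⟩
  have h1 : G.dist o (p.reverse.getVert 1) ≤ p.reverse.tail.reverse.length :=
    dist_le _
  rw [Walk.length_reverse] at h1
  have h2 : p.reverse.tail.length + 1 = p.reverse.length := Walk.length_tail_add_one hnil
  rw [Walk.length_reverse] at h2
  have t : G.dist o v ≤ G.dist o (p.reverse.getVert 1) + 1 := by
    have hadj := (Walk.adj_snd hnil).symm
    have : G.dist (p.reverse.getVert 1) v = 1 := dist_eq_one_iff_adj.mpr hadj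
    have := hc.dist_triangle (u := o) (v := p.reverse.getVert 1) (w := v)
    omega
  omega

/-- Uniqueness of the parent in a tree. -/
lemma parent_unique (hc : G.Connected) (ht : G.IsAcyclic) {v u₁ u₂ : V}
    (h₁ : G.Adj v u₁) (hd₁ : G.dist o u₁ + 1 = G.dist o v)
    (h₂ : G.Adj v u₂) (hd₂ : G.dist o u₂ + 1 = G.dist o v) : u₁ = u₂ := by
  classical
  obtain ⟨p₁, hp₁, hl₁⟩ := hc.exists_path_of_dist o u₁
  obtain ⟨p₂, hp₂, hl₂⟩ := hc.exists_path_of_dist o u₂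
  have hvs : ∀ (u : V) (p : G.Walk o u), p.IsPath → p.length = G.dist o u →
      G.dist o u + 1 = G.dist o v → v ∉ p.support := by
    intro u p hp hl hd hv
    have h1 : G.dist o v ≤ (p.takeUntil v hv).length := dist_le _
    have h2 := Walk.length_takeUntil_le p hv
    omega
  have hq₁ : (Walk.cons h₁ p₁.reverse).IsPath :=
    hp₁.reverse.cons (by rw [Walk.support_reverse, List.mem_reverse]
                         exact hvs _ _ hp₁ hl₁ hd₁)
  have hq₂ : (Walk.cons h₂ p₂.reverse).IsPath :=
    hp₂.reverse.cons (by rw [Walk.support_reverse, List.mem_reverse]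
                         exact hvs _ _ hp₂ hl₂ hd₂)
  have huniq := ht.path_unique ⟨Walk.cons h₁ p₁.reverse, hq₁⟩ ⟨Walk.cons h₂ p₂.reverse, hq₂⟩
  have hg : (Walk.cons h₁ p₁.reverse).getVert 1 = (Walk.cons h₂ p₂.reverse).getVert 1 :=
    congrArg (fun r : G.Path v o => (r : G.Walk v o).getVert 1) huniq
  exact (Walk.snd_cons p₁.reverse h₁).symm.trans (hg.trans (Walk.snd_cons p₂.reverse h₂))



end AuxTreeLemmas

/-- A rooted graph: connected, locally finite simple graph with a distinguished root.
The finiteness of spheres is a consequence of connectedness and local finiteness,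
recorded here as a field for convenience. -/
structure RootedGraph (V : Type*) where
  G : SimpleGraph V
  o : V
  connected : G.Connected
  locFin : ∀ v : V, (G.neighborSet v).Finite
  sphereFin : ∀ n : ℕ, {v : V | G.dist o v = n}.Finite

namespace RootedGraph

variable {V : Type*} (R : RootedGraph V)

/-- The sphere of radius `n` around the root. -/
def sphere (n : ℕ) : Set V := {v : V | R.G.dist R.o v = n}

noncomputable instance (n : ℕ) : Fintype ↥(R.sphere n) := (R.sphereFin n).fintype

/-- A k-forward path from `x` to `y` (both in sphere `n`): a path of length `2k`
going up `k` spheres and then back down, encoded as a function `ℕ → V`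
that is constantly `y` from index `2k` on. -/
def IsForwardPath (n k : ℕ) (x y : V) (p : ℕ → V) : Prop :=
  p 0 = x ∧ (∀ j, 2*k ≤ j → p j = y) ∧
  (∀ j, j < 2*k → R.G.Adj (p j) (p (j+1))) ∧
  (∀ j, j ≤ k → p j ∈ R.sphere (n + j)) ∧
  (∀ j, k ≤ j → j ≤ 2*k → p j ∈ R.sphere (n + (2*k - j)))

/-- A k-backward path from `x` to `y` (both in sphere `n`): a path of length `2k`
going down `k` spheres (so `k ≤ n`) and then back up. -/
def IsBackwardPath (n k : ℕ) (x y : V) (p : ℕ → V) : Prop :=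
  k ≤ n ∧ p 0 = x ∧ (∀ j, 2*k ≤ j → p j = y) ∧
  (∀ j, j < 2*k → R.G.Adj (p j) (p (j+1))) ∧
  (∀ j, j ≤ k → p j ∈ R.sphere (n - j)) ∧
  (∀ j, k ≤ j → j ≤ 2*k → p j ∈ R.sphere (n - (2*k - j)))

/-- Number of (k,ℓ)-forward-backward paths from `x` to `y`. -/
noncomputable def fbCount (n k l : ℕ) (x y : V) : ℕ :=
  Nat.card {pq : (ℕ → V) × (ℕ → V) //
    R.IsForwardPath n k x (pq.1 (2*k)) pq.1 ∧
    R.IsBackwardPath n l (pq.1 (2*k)) y pq.2}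

/-- Number of (ℓ,k)-backward-forward paths from `x` to `y`. -/
noncomputable def bfCount (n l k : ℕ) (x y : V) : ℕ :=
  Nat.card {pq : (ℕ → V) × (ℕ → V) //
    R.IsBackwardPath n l x (pq.1 (2*l)) pq.1 ∧
    R.IsForwardPath n k (pq.1 (2*l)) y pq.2}

/-- Number of tailed-k-forward paths from `x` to `y`. -/
noncomputable def tailedFCount (n k : ℕ) (x y : V) : ℕ :=
  Nat.card {p : ℕ → V // R.IsForwardPath n k x (p (2*k)) p ∧ R.G.Adj (p (2*k)) y}

/-- Number of headed-k-forward paths from `x` to `y`. -/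
noncomputable def headedFCount (n k : ℕ) (x y : V) : ℕ :=
  Nat.card {p : ℕ → V // R.G.Adj x (p 0) ∧ R.IsForwardPath n k (p 0) y p}

/-- Number of tailed-k-backward paths from `x` to `y`. -/
noncomputable def tailedBCount (n k : ℕ) (x y : V) : ℕ :=
  Nat.card {p : ℕ → V // R.IsBackwardPath n k x (p (2*k)) p ∧ R.G.Adj (p (2*k)) y}

/-- Number of headed-k-backward paths from `x` to `y`. -/
noncomputable def headedBCount (n k : ℕ) (x y : V) : ℕ :=
  Nat.card {p : ℕ → V // R.G.Adj x (p 0) ∧ R.IsBackwardPath n k (p 0) y p}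

/-- Path commuting rooted graph. -/
def PathCommuting : Prop :=
  ∀ n : ℕ, ∀ x ∈ R.sphere n, ∀ y ∈ R.sphere n, ∀ k l : ℕ,
    R.fbCount n k l x y = R.bfCount n l k x y ∧
    R.tailedFCount n k x y = R.headedFCount n k x y ∧
    R.tailedBCount n k x y = R.headedBCount n k x y

/-- Family preserving rooted graph. -/
def FamilyPreserving : Prop :=
  (∀ n : ℕ, ∀ x ∈ R.sphere n, ∀ y ∈ R.sphere n, ∀ z ∈ R.sphere (n+1),
    R.G.Adj x z → R.G.Adj y z →
    ∃ τ : R.G ≃g R.G, τ R.o = R.o ∧ τ x = y ∧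
      ∀ j : ℕ, 1 ≤ j → ∀ v ∈ R.sphere (n+j), τ v = v) ∧
  (∀ n : ℕ, 1 ≤ n → ∀ x ∈ R.sphere n, ∀ y ∈ R.sphere n, ∀ z ∈ R.sphere (n-1),
    R.G.Adj x z → R.G.Adj y z →
    ∃ τ : R.G ≃g R.G, τ R.o = R.o ∧ τ x = y ∧
      ∀ j : ℕ, 1 ≤ j → j ≤ n → ∀ v ∈ R.sphere (n-j), τ v = v) ∧
  (∀ n : ℕ, ∀ x ∈ R.sphere n, ∀ y ∈ R.sphere n, R.G.Adj x y →
    ∃ γ : R.G ≃g R.G, γ R.o = R.o ∧ γ x = y ∧ γ y = x)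

/-- The 0-1 edge matrix between spheres `j` and `j+1`. -/
noncomputable def Esub (j : ℕ) : Matrix ↥(R.sphere (j+1)) ↥(R.sphere j) ℕ :=
  fun u v => if R.G.Adj u.1 v.1 then 1 else 0

/-- The adjacency matrix of the subgraph induced on sphere `n`. -/
noncomputable def Vsub (n : ℕ) : Matrix ↥(R.sphere n) ↥(R.sphere n) ℕ :=
  fun u v => if R.G.Adj u.1 v.1 then 1 else 0

/-- The product `E_{m+l-1} ⋯ E_{m+1} E_m` of edge matrices (identity for `l = 0`). -/
noncomputable def chainProd (m : ℕ) : (l : ℕ) → Matrix ↥(R.sphere (m + l)) ↥(R.sphere m) ℕ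
  | 0 => (1 : Matrix ↥(R.sphere m) ↥(R.sphere m) ℕ)
  | l+1 => R.Esub (m+l) * chainProd m l

/-- `Λ_{n,+k} = E_n^T ⋯ E_{n+k-1}^T E_{n+k-1} ⋯ E_n`, which counts `k`-forward paths. -/
noncomputable def lamPlus (n k : ℕ) : Matrix ↥(R.sphere n) ↥(R.sphere n) ℕ :=
  (R.chainProd n k)ᵀ * R.chainProd n k

/-- `Λ_{m+l,-l} = E_{m+l-1} ⋯ E_m E_m^T ⋯ E_{m+l-1}^T`, which counts `l`-backward paths. -/
noncomputable def lamMinus (m l : ℕ) : Matrix ↥(R.sphere (m + l)) ↥(R.sphere (m + l)) ℕ :=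
  R.chainProd m l * (R.chainProd m l)ᵀ

/-- `Λ_{n,-j}`, defined as the identity when `j > n`. -/
noncomputable def lamMinusAll : (n j : ℕ) → Matrix ↥(R.sphere n) ↥(R.sphere n) ℕ
  | _, 0 => 1
  | 0, _+1 => 1
  | n+1, j+1 => if j + 1 ≤ n + 1 then R.Esub n * lamMinusAll n j * (R.Esub n)ᵀ else 1

/-- The graph Laplacian acting on real-valued functions. -/
noncomputable def lap (φ : V → ℝ) (x : V) : ℝ :=
  ∑ᶠ y ∈ R.G.neighborSet x, (φ x - φ y)

/-- An antitree: two vertices are adjacent iff their distances to the root differ by one. -/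
def IsAntitree : Prop :=
  ∀ x y : V, R.G.Adj x y ↔
    (R.G.dist R.o x + 1 = R.G.dist R.o y ∨ R.G.dist R.o y + 1 = R.G.dist R.o x)

/-- The set `Z^{k,ℓ}_{x,y}` of vertices in sphere `n` reachable from `x` by a `k`-forward
path and from `y` by an `ℓ`-backward path. -/
def Zset (n k l : ℕ) (x y : V) : Set V :=
  {z | z ∈ R.sphere n ∧ (∃ p, R.IsForwardPath n k x z p) ∧ (∃ q, R.IsBackwardPath n l y z q)}

end RootedGraph


namespace RootedGraph

variable {V : Type*} (R : RootedGraph V)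

lemma mem_sphere {v : V} {m : ℕ} : v ∈ R.sphere m ↔ R.G.dist R.o v = m := Iff.rfl

lemma sphere_cast {v : V} {m m' : ℕ} (h : m = m') (hv : v ∈ R.sphere m) :
    v ∈ R.sphere m' := h ▸ hv

/-- The parent function. -/
noncomputable def par (v : V) : V :=
  if h : R.G.dist R.o v = 0 then v else (parent_exists R.connected h).choose

lemma par_spec {v : V} {m : ℕ} (hv : v ∈ R.sphere (m + 1)) :
    R.G.Adj v (R.par v) ∧ R.par v ∈ R.sphere m := by
  have hd : R.G.dist R.o v = m + 1 := hv
  have h0 : R.G.dist R.o v ≠ 0 := by omega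
  have hs := (parent_exists R.connected h0).choose_spec
  rw [par, dif_neg h0]
  exact ⟨hs.1, by rw [mem_sphere]; omega⟩

lemma par_adj {v : V} {m : ℕ} (hv : v ∈ R.sphere (m + 1)) : R.G.Adj v (R.par v) :=
  (R.par_spec hv).1

lemma par_mem {v : V} {m : ℕ} (hv : v ∈ R.sphere (m + 1)) : R.par v ∈ R.sphere m :=
  (R.par_spec hv).2

lemma eq_par (htree : R.G.IsAcyclic) {u v : V} {m : ℕ} (hu : u ∈ R.sphere m)
    (hv : v ∈ R.sphere (m + 1)) (h : R.G.Adj u v) : u = R.par v := by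
  have hd : R.G.dist R.o v = m + 1 := hv
  have hu' : R.G.dist R.o u = m := hu
  have hp' : R.G.dist R.o (R.par v) = m := R.par_mem hv
  exact parent_unique (o := R.o) R.connected htree h.symm (by omega)
    (R.par_adj hv) (by omega)

lemma parIter_mem {v : V} {m : ℕ} (hv : v ∈ R.sphere m) :
    ∀ j, j ≤ m → R.par^[j] v ∈ R.sphere (m - j) := by
  intro j
  induction j with
  | zero => simpa using hv
  | succ i ih =>
    intro hij
    rw [Function.iterate_succ_apply']
    have hmem : R.par^[i] v ∈ R.sphere (m - i) := ih (by omega)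
    have : R.par^[i] v ∈ R.sphere ((m - (i+1)) + 1) := R.sphere_cast (by omega) hmem
    exact R.par_mem this

lemma sphere_zero {v : V} (hv : v ∈ R.sphere 0) : v = R.o := by
  rw [mem_sphere] at hv
  exact (R.connected.dist_eq_zero_iff.mp hv).symm

lemma parIter_root {v : V} {n : ℕ} (hv : v ∈ R.sphere n) : R.par^[n] v = R.o :=
  R.sphere_zero (R.sphere_cast (by omega) (R.parIter_mem hv n le_rfl))

lemma no_adj_same (htree : R.G.IsAcyclic) {u v : V} {n : ℕ} (hu : u ∈ R.sphere n)
    (hv : v ∈ R.sphere n) (h : R.G.Adj u v) : False := by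
  rw [mem_sphere] at hu hv
  have := tree_adj_dist (o := R.o) R.connected htree h
  omega

end RootedGraph

namespace RootedGraph

variable {V : Type*} (R : RootedGraph V)

/-- The canonical forward path determined by its apex `w`. -/
noncomputable def fpath (k : ℕ) (w : V) : ℕ → V := fun j =>
  if j ≤ k then R.par^[k - j] w else R.par^[min (j - k) k] w

lemma fpath_le {k j : ℕ} (hj : j ≤ k) (w : V) : R.fpath k w j = R.par^[k - j] w :=
  if_pos hj

lemma fpath_ge {k j : ℕ} (hj : k ≤ j) (w : V) : R.fpath k w j = R.par^[min (j - k) k] w := by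
  rcases Nat.lt_or_ge k j with h | h
  · exact if_neg (by omega)
  · have hkj : j = k := le_antisymm h hj
    subst hkj
    rw [fpath, if_pos le_rfl]
    simp

lemma parIter_mem' {w : V} {n k i : ℕ} (hw : w ∈ R.sphere (n + k)) (hi : i ≤ k) :
    R.par^[i] w ∈ R.sphere (n + (k - i)) :=
  R.sphere_cast (by omega) (R.parIter_mem hw i (by omega))

lemma forward_char (htree : R.G.IsAcyclic) {n k : ℕ} {x z : V} {p : ℕ → V} :
    R.IsForwardPath n k x z p ↔
      ∃ w, w ∈ R.sphere (n + k) ∧ R.par^[k] w = x ∧ z = x ∧ p = R.fpath k w := by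
  constructor
  · rintro ⟨h0, hz, hadj, hup, hdn⟩
    have hk : p k ∈ R.sphere (n + k) := R.sphere_cast (by omega) (hup k le_rfl)
    refine ⟨p k, hk, ?_⟩
    -- downward claim
    have down : ∀ i, i ≤ k → p (k - i) = R.par^[i] (p k) := by
      intro i
      induction i with
      | zero => simp
      | succ i ih =>
        intro hik
        have hji : k - (i + 1) < 2 * k := by omega
        have ha := hadj (k - (i + 1)) hji
        have he : k - (i + 1) + 1 = k - i := by omega
        rw [he] at ha
        have h1 : p (k - (i+1)) ∈ R.sphere (n + (k - (i+1))) := hup _ (by omega)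
        have h2 : p (k - i) ∈ R.sphere ((n + (k - (i+1))) + 1) :=
          R.sphere_cast (by omega) (hup (k - i) (by omega))
        have := R.eq_par htree h1 h2 ha
        rw [this, ih (by omega)]
        exact (Function.iterate_succ_apply' _ _ _).symm
    have hx : R.par^[k] (p k) = x := by
      have := down k le_rfl
      simp at this
      rw [← this, h0]
    refine ⟨hx, ?_, ?_⟩
    · -- z = x
      have up : ∀ i, i ≤ k → p (k + i) = R.par^[i] (p k) := by
        intro i
        induction i with
        | zero => simp
        | succ i ih =>
          intro hik
          have ha := hadj (k + i) (by omega)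
          have h1 : p (k + i) ∈ R.sphere ((n + (k - (i+1))) + 1) :=
            R.sphere_cast (by omega) (hdn (k + i) (by omega) (by omega))
          have h2 : p (k + i + 1) ∈ R.sphere (n + (k - (i+1))) :=
            R.sphere_cast (by omega) (hdn (k + i + 1) (by omega) (by omega))
          have := R.eq_par htree h2 h1 ha.symm
          show p (k + i + 1) = _
          rw [this, ih (by omega)]
          exact (Function.iterate_succ_apply' _ _ _).symm
      have h2k : p (2 * k) = R.par^[k] (p k) := by
        have := up k le_rfl
        rwa [show k + k = 2 * k by omega] at this
      rw [← hz (2*k) le_rfl, h2k, hx]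
    · -- p = fpath
      have up : ∀ i, i ≤ k → p (k + i) = R.par^[i] (p k) := by
        intro i
        induction i with
        | zero => simp
        | succ i ih =>
          intro hik
          have ha := hadj (k + i) (by omega)
          have h1 : p (k + i) ∈ R.sphere ((n + (k - (i+1))) + 1) :=
            R.sphere_cast (by omega) (hdn (k + i) (by omega) (by omega))
          have h2 : p (k + i + 1) ∈ R.sphere (n + (k - (i+1))) :=
            R.sphere_cast (by omega) (hdn (k + i + 1) (by omega) (by omega))
          have := R.eq_par htree h2 h1 ha.symm
          show p (k + i + 1) = _
          rw [this, ih (by omega)]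
          exact (Function.iterate_succ_apply' _ _ _).symm
      funext j
      rcases Nat.le_total j k with hj | hj
      · rw [R.fpath_le hj]
        have := down (k - j) (by omega)
        rwa [show k - (k - j) = j by omega] at this
      · rcases Nat.le_total j (2 * k) with hj2 | hj2
        · rw [R.fpath_ge hj, show min (j - k) k = j - k by omega]
          have := up (j - k) (by omega)
          rwa [show k + (j - k) = j by omega] at this
        · rw [R.fpath_ge hj, show min (j - k) k = k by omega]
          have h2k : p (2 * k) = R.par^[k] (p k) := by
            have := up k le_rfl
            rwa [show k + k = 2 * k by omega] at this
          rw [hz j (by omega), ← hz (2 * k) le_rfl, h2k]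
  · rintro ⟨w, hw, hx, hzx, hp⟩
    subst hp hzx
    have hpk : ∀ i ≤ k, R.par^[i] w ∈ R.sphere (n + (k - i)) := fun i hi => R.parIter_mem' hw hi
    refine ⟨?_, ?_, ?_, ?_, ?_⟩
    · rw [R.fpath_le (Nat.zero_le k)]
      simpa using hx
    · intro j hj
      rw [R.fpath_ge (by omega)]
      rcases Nat.eq_zero_or_pos k with h0 | h0
      · subst h0; simpa using hx
      · rw [show min (j - k) k = k by omega]; exact hx
    · intro j hj
      rcases Nat.lt_or_ge (j + 1) (k + 1) with h1 | h1
      · -- going up: j + 1 ≤ k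
        rw [R.fpath_le (by omega), R.fpath_le (by omega)]
        have he : k - j = (k - (j+1)) + 1 := by omega
        rw [he, Function.iterate_succ_apply']
        have hmem : R.par^[k - (j+1)] w ∈ R.sphere ((n + j) + 1) :=
          R.sphere_cast (by omega) (hpk _ (by omega))
        exact (R.par_adj hmem).symm
      · -- going down: k ≤ j
        rw [R.fpath_ge (by omega), R.fpath_ge (by omega),
          show min (j - k) k = j - k by omega, show min (j + 1 - k) k = (j - k) + 1 by omega,
          Function.iterate_succ_apply']
        have hmem : R.par^[j - k] w ∈ R.sphere ((n + (k - (j - k) - 1)) + 1) :=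
          R.sphere_cast (by omega) (hpk _ (by omega))
        exact R.par_adj hmem
    · intro j hj
      rw [R.fpath_le hj]
      exact R.sphere_cast (by omega) (hpk _ (by omega))
    · intro j hj1 hj2
      rw [R.fpath_ge hj1, show min (j - k) k = j - k by omega]
      exact R.sphere_cast (by omega) (hpk _ (by omega))

end RootedGraph

namespace RootedGraph

variable {V : Type*} (R : RootedGraph V)

/-- The canonical backward path from `x` to `y`. -/
noncomputable def bpath (k : ℕ) (x y : V) : ℕ → V := fun j =>
  if j ≤ k then R.par^[j] x else R.par^[2 * k - j] y

lemma backward_char (htree : R.G.IsAcyclic) {n k : ℕ} {x y : V} {p : ℕ → V}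
    (hx : x ∈ R.sphere n) (hy : y ∈ R.sphere n) :
    R.IsBackwardPath n k x y p ↔
      k ≤ n ∧ R.par^[k] x = R.par^[k] y ∧ p = R.bpath k x y := by
  constructor
  · rintro ⟨hkn, h0, hz, hadj, hdn, hup⟩
    have down : ∀ j, j ≤ k → p j = R.par^[j] x := by
      intro j
      induction j with
      | zero => simpa using h0
      | succ i ih =>
        intro hik
        have ha := hadj i (by omega)
        have h1 : p (i + 1) ∈ R.sphere (n - (i + 1)) := hdn _ (by omega)
        have h2 : p i ∈ R.sphere ((n - (i + 1)) + 1) :=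
          R.sphere_cast (by omega) (hdn i (by omega))
        have := R.eq_par htree h1 h2 ha.symm
        rw [this, ih (by omega)]
        exact (Function.iterate_succ_apply' _ _ _).symm
    have up : ∀ i, i ≤ k → p (2 * k - i) = R.par^[i] y := by
      intro i
      induction i with
      | zero => simpa using hz (2 * k) le_rfl
      | succ i ih =>
        intro hik
        have ha := hadj (2 * k - (i + 1)) (by omega)
        have he : 2 * k - (i + 1) + 1 = 2 * k - i := by omega
        rw [he] at ha
        have h1 : p (2 * k - (i + 1)) ∈ R.sphere (n - (i + 1)) :=
          R.sphere_cast (by omega) (hup (2 * k - (i + 1)) (by omega) (by omega))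
        have h2 : p (2 * k - i) ∈ R.sphere ((n - (i + 1)) + 1) :=
          R.sphere_cast (by omega) (hup (2 * k - i) (by omega) (by omega))
        have := R.eq_par htree h1 h2 ha
        rw [this, ih (by omega)]
        exact (Function.iterate_succ_apply' _ _ _).symm
    refine ⟨hkn, ?_, ?_⟩
    · rw [← down k le_rfl]
      have := up k le_rfl
      rwa [show 2 * k - k = k by omega] at this
    · funext j
      rcases le_or_gt j k with hj | hj
      · rw [bpath, if_pos hj]
        exact down j hj
      · rw [bpath, if_neg (by omega)]
        rcases le_or_gt j (2 * k) with hj2 | hj2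
        · have := up (2 * k - j) (by omega)
          rwa [show 2 * k - (2 * k - j) = j by omega] at this
        · rw [show 2 * k - j = 0 by omega]
          simpa using hz j (by omega)
  · rintro ⟨hkn, hmeet, hp⟩
    subst hp
    have hbj : ∀ j, k ≤ j → R.bpath k x y j = R.par^[2 * k - j] y := by
      intro j hj
      rcases Nat.lt_or_ge k j with h | h
      · rw [bpath, if_neg (by omega)]
      · have hjk : j = k := by omega
        rw [hjk, bpath, if_pos le_rfl, hmeet, show 2 * k - k = k by omega]
    refine ⟨hkn, ?_, ?_, ?_, ?_, ?_⟩
    · rw [bpath, if_pos (Nat.zero_le k)]; simp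
    · intro j hj
      rw [hbj j (by omega), show 2 * k - j = 0 by omega]
      simp
    · intro j hj
      rcases Nat.lt_or_ge (j + 1) (k + 1) with h1 | h1
      · rw [bpath, if_pos (by omega : j ≤ k), bpath, if_pos (by omega : j + 1 ≤ k),
          Function.iterate_succ_apply']
        have hmem : R.par^[j] x ∈ R.sphere ((n - (j + 1)) + 1) :=
          R.sphere_cast (by omega) (R.parIter_mem hx j (by omega))
        exact R.par_adj hmem
      · rw [hbj j (by omega), hbj (j + 1) (by omega),
          show 2 * k - j = (2 * k - (j + 1)) + 1 by omega, Function.iterate_succ_apply']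
        have hmem : R.par^[2 * k - (j + 1)] y ∈ R.sphere ((n - (2 * k - j)) + 1) :=
          R.sphere_cast (by omega) (R.parIter_mem hy _ (by omega))
        exact (R.par_adj hmem).symm
    · intro j hj
      rw [bpath, if_pos hj]
      exact R.parIter_mem hx j (by omega)
    · intro j hj1 hj2
      rw [hbj j hj1]
      exact R.parIter_mem hy _ (by omega)

end RootedGraph

namespace RootedGraph

variable {V : Type*} (R : RootedGraph V)

/-- Number of descendants of `x` in sphere `n+k` (as a `Nat.card`). -/
noncomputable def descCount (n k : ℕ) (x : V) : ℕ :=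
  Nat.card {w : V // w ∈ R.sphere (n + k) ∧ R.par^[k] w = x}

lemma fpath_apply_k (k : ℕ) (w : V) : R.fpath k w k = w := by
  rw [R.fpath_le le_rfl]; simp

lemma fpath_apply_2k (k : ℕ) (w : V) : R.fpath k w (2 * k) = R.par^[k] w := by
  rw [R.fpath_ge (by omega), show min (2 * k - k) k = k by omega]

/-- Counting forward paths from `x` with free endpoint. -/
lemma card_forward_free (htree : R.G.IsAcyclic) (n k : ℕ) (x : V) :
    Nat.card {p : ℕ → V // R.IsForwardPath n k x (p (2 * k)) p} = R.descCount n k x := by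
  apply Nat.card_congr
  refine
    { toFun := fun p => ⟨p.1 k, ?_⟩
      invFun := fun w => ⟨R.fpath k w.1, ?_⟩
      left_inv := ?_
      right_inv := ?_ }
  · obtain ⟨w, hw, hkx, hzx, hp⟩ := (R.forward_char htree).mp p.2
    rw [hp, R.fpath_apply_k]
    exact ⟨hw, hkx⟩
  · refine (R.forward_char htree).mpr ⟨w.1, w.2.1, w.2.2, ?_, rfl⟩
    rw [R.fpath_apply_2k, w.2.2]
  · rintro ⟨p, hp⟩
    obtain ⟨w, hw, hkx, hzx, hpe⟩ := (R.forward_char htree).mp hp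
    apply Subtype.ext
    simp only
    conv_lhs => rw [hpe, R.fpath_apply_k]
    exact hpe.symm
  · rintro ⟨w, hw⟩
    apply Subtype.ext
    simp only [R.fpath_apply_k]

/-- Counting forward paths from `y` to `y` (fixed endpoint). -/
lemma card_forward_fixed (htree : R.G.IsAcyclic) (n k : ℕ) (y : V) :
    Nat.card {p : ℕ → V // R.IsForwardPath n k y y p} = R.descCount n k y := by
  apply Nat.card_congr
  refine
    { toFun := fun p => ⟨p.1 k, ?_⟩
      invFun := fun w => ⟨R.fpath k w.1, ?_⟩
      left_inv := ?_
      right_inv := ?_ }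
  · obtain ⟨w, hw, hkx, hzx, hp⟩ := (R.forward_char htree).mp p.2
    rw [hp, R.fpath_apply_k]
    exact ⟨hw, hkx⟩
  · exact (R.forward_char htree).mpr ⟨w.1, w.2.1, w.2.2, rfl, rfl⟩
  · rintro ⟨p, hp⟩
    obtain ⟨w, hw, hkx, hzx, hpe⟩ := (R.forward_char htree).mp hp
    apply Subtype.ext
    simp only
    conv_lhs => rw [hpe, R.fpath_apply_k]
    exact hpe.symm
  · rintro ⟨w, hw⟩
    apply Subtype.ext
    simp only [R.fpath_apply_k]

/-- Counting backward paths from `x` to `y`. -/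
lemma card_backward (htree : R.G.IsAcyclic) {n : ℕ} (l : ℕ) {x y : V}
    (hx : x ∈ R.sphere n) (hy : y ∈ R.sphere n) :
    Nat.card {q : ℕ → V // R.IsBackwardPath n l x y q} =
      if l ≤ n ∧ R.par^[l] x = R.par^[l] y then 1 else 0 := by
  by_cases hc : l ≤ n ∧ R.par^[l] x = R.par^[l] y
  · rw [if_pos hc]
    rw [Nat.card_eq_one_iff_unique]
    constructor
    · constructor
      rintro ⟨q, hq⟩ ⟨q', hq'⟩
      apply Subtype.ext
      have h1 := ((R.backward_char htree hx hy).mp hq).2.2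
      have h2 := ((R.backward_char htree hx hy).mp hq').2.2
      simp only
      rw [h1, h2]
    · exact ⟨⟨R.bpath l x y, (R.backward_char htree hx hy).mpr ⟨hc.1, hc.2, rfl⟩⟩⟩
  · rw [if_neg hc]
    have : IsEmpty {q : ℕ → V // R.IsBackwardPath n l x y q} := by
      constructor
      rintro ⟨q, hq⟩
      obtain ⟨h1, h2, _⟩ := (R.backward_char htree hx hy).mp hq
      exact hc ⟨h1, h2⟩
    exact Nat.card_of_isEmpty

lemma forward_endpoint (htree : R.G.IsAcyclic) {n k : ℕ} {x z : V} {p : ℕ → V}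
    (hp : R.IsForwardPath n k x z p) : z = x := by
  obtain ⟨w, _, _, hzx, _⟩ := (R.forward_char htree).mp hp
  exact hzx

lemma forward_start_mem (htree : R.G.IsAcyclic) {n k : ℕ} {x z : V} {p : ℕ → V}
    (hp : R.IsForwardPath n k x z p) : x ∈ R.sphere n := by
  obtain ⟨w, hw, hkx, _, _⟩ := (R.forward_char htree).mp hp
  have := R.parIter_mem' hw (le_refl k)
  rw [hkx] at this
  exact R.sphere_cast (by omega) this

/-- fbCount formula. -/
lemma fbCount_eq (htree : R.G.IsAcyclic) {n : ℕ} (k l : ℕ) {x y : V}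
    (hx : x ∈ R.sphere n) (hy : y ∈ R.sphere n) :
    R.fbCount n k l x y =
      R.descCount n k x * (if l ≤ n ∧ R.par^[l] x = R.par^[l] y then 1 else 0) := by
  rw [← R.card_forward_free htree n k x, ← R.card_backward htree l hx hy, ← Nat.card_prod]
  rw [fbCount]
  have hiff : ∀ pq : (ℕ → V) × (ℕ → V),
      (R.IsForwardPath n k x (pq.1 (2*k)) pq.1 ∧ R.IsBackwardPath n l (pq.1 (2*k)) y pq.2) ↔
      (R.IsForwardPath n k x (pq.1 (2*k)) pq.1 ∧ R.IsBackwardPath n l x y pq.2) := by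
    intro pq
    constructor
    · rintro ⟨hf, hb⟩
      have he : pq.1 (2*k) = x := R.forward_endpoint htree hf
      rw [he] at hb
      exact ⟨hf, hb⟩
    · rintro ⟨hf, hb⟩
      have he : pq.1 (2*k) = x := R.forward_endpoint htree hf
      rw [← he] at hb
      exact ⟨hf, hb⟩
  rw [Nat.card_congr (Equiv.subtypeEquivRight hiff)]
  exact Nat.card_congr (Equiv.subtypeProdEquivProd
    (p := fun p : ℕ → V => R.IsForwardPath n k x (p (2*k)) p)
    (q := fun q : ℕ → V => R.IsBackwardPath n l x y q))

/-- bfCount formula. -/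
lemma bfCount_eq (htree : R.G.IsAcyclic) {n : ℕ} (l k : ℕ) {x y : V}
    (hx : x ∈ R.sphere n) (hy : y ∈ R.sphere n) :
    R.bfCount n l k x y =
      (if l ≤ n ∧ R.par^[l] x = R.par^[l] y then 1 else 0) * R.descCount n k y := by
  rw [← R.card_forward_fixed htree n k y, ← R.card_backward htree l hx hy, ← Nat.card_prod]
  rw [bfCount]
  have hiff : ∀ pq : (ℕ → V) × (ℕ → V),
      (R.IsBackwardPath n l x (pq.1 (2*l)) pq.1 ∧ R.IsForwardPath n k (pq.1 (2*l)) y pq.2) ↔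
      (R.IsBackwardPath n l x y pq.1 ∧ R.IsForwardPath n k y y pq.2) := by
    intro pq
    constructor
    · rintro ⟨hb, hf⟩
      have he : y = pq.1 (2*l) := R.forward_endpoint htree hf
      rw [← he] at hb hf
      exact ⟨hb, hf⟩
    · rintro ⟨hb, hf⟩
      have he : pq.1 (2*l) = y := hb.2.2.1 (2*l) le_rfl
      rw [he]
      exact ⟨hb, hf⟩
  rw [Nat.card_congr (Equiv.subtypeEquivRight hiff)]
  exact Nat.card_congr (Equiv.subtypeProdEquivProd
    (p := fun q : ℕ → V => R.IsBackwardPath n l x y q)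
    (q := fun p : ℕ → V => R.IsForwardPath n k y y p))

end RootedGraph

namespace RootedGraph

variable {V : Type*} (R : RootedGraph V)

lemma desc_finite (m : ℕ) (P : V → Prop) :
    Finite {w : V // w ∈ R.sphere m ∧ P w} :=
  Set.Finite.to_subtype ((R.sphereFin m).subset (fun w hw => hw.1))

/-- The number of children equals the `descCount` at depth one, and equals
the `ncard` of the forward-neighbour set. -/
lemma childCard (htree : R.G.IsAcyclic) {n : ℕ} {x : V} (hx : x ∈ R.sphere n) :
    Nat.card {c : V // c ∈ R.sphere (n + 1) ∧ R.par c = x} =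
      {w : V | R.G.Adj x w ∧ w ∈ R.sphere (n + 1)}.ncard := by
  rw [← Nat.card_coe_set_eq]
  apply Nat.card_congr
  apply Equiv.subtypeEquivRight
  intro w
  simp only [Set.mem_setOf_eq]
  constructor
  · rintro ⟨h1, h2⟩
    refine ⟨?_, h1⟩
    rw [← h2]
    exact (R.par_adj h1).symm
  · rintro ⟨h1, h2⟩
    exact ⟨h2, (R.eq_par htree hx h2 h1).symm⟩

lemma descCount_one (htree : R.G.IsAcyclic) {n : ℕ} {x : V} (hx : x ∈ R.sphere n) :
    R.descCount n 1 x = {w : V | R.G.Adj x w ∧ w ∈ R.sphere (n + 1)}.ncard := by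
  rw [← R.childCard htree hx, descCount]
  apply Nat.card_congr
  apply Equiv.subtypeEquivRight
  intro w
  rw [Function.iterate_one]

lemma descCount_zero {n : ℕ} {x : V} (hx : x ∈ R.sphere n) : R.descCount n 0 x = 1 := by
  rw [descCount, Nat.card_eq_one_iff_unique]
  constructor
  · constructor
    rintro ⟨w, _, hw⟩ ⟨w', _, hw'⟩
    apply Subtype.ext
    simp only at hw hw' ⊢
    simp only [Function.iterate_zero, id_eq] at hw hw'
    rw [hw, hw']
  · exact ⟨⟨x, by simpa using hx, by simp⟩⟩

/-- Recurrence: descendants at depth `k+1` fibered over children. -/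
lemma descCount_succ (htree : R.G.IsAcyclic) {n k : ℕ} {x : V} (hx : x ∈ R.sphere n) :
    R.descCount n (k + 1) x =
      Nat.card (Σ c : {c : V // c ∈ R.sphere (n + 1) ∧ R.par c = x},
        {w : V // w ∈ R.sphere (n + 1 + k) ∧ R.par^[k] w = c.1}) := by
  set C := {c : V // c ∈ R.sphere (n + 1) ∧ R.par c = x} with hC
  set D := {w : V // w ∈ R.sphere (n + (k + 1)) ∧ R.par^[k + 1] w = x} with hD
  have memf : ∀ w : D, R.par^[k] w.1 ∈ R.sphere (n + 1) ∧ R.par (R.par^[k] w.1) = x := by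
    rintro ⟨w, hw, hpw⟩
    constructor
    · have hw' : w ∈ R.sphere ((n + 1) + k) := R.sphere_cast (by omega) hw
      exact R.sphere_cast (by omega) (R.parIter_mem' hw' le_rfl)
    · exact (Function.iterate_succ_apply' _ _ _).symm.trans hpw
  let f : D → C := fun w => ⟨R.par^[k] w.1, memf w⟩
  have e1 : (Σ c : C, { w : D // f w = c }) ≃ D := Equiv.sigmaFiberEquiv f
  have e2 : ∀ c : C, { w : D // f w = c } ≃
      {w : V // w ∈ R.sphere (n + 1 + k) ∧ R.par^[k] w = c.1} := by
    intro c
    refine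
      { toFun := fun w => ⟨w.1.1, R.sphere_cast (by omega) w.1.2.1, ?_⟩
        invFun := fun v => ⟨⟨v.1, R.sphere_cast (by omega) v.2.1, ?_⟩, ?_⟩
        left_inv := fun w => Subtype.ext (Subtype.ext rfl)
        right_inv := fun v => rfl }
    · have := congrArg Subtype.val w.2
      exact this
    · rw [Function.iterate_succ_apply', v.2.2]
      exact c.2.2
    · apply Subtype.ext
      exact v.2.2
  exact (Nat.card_congr (e1.symm.trans (Equiv.sigmaCongrRight e2))).symm.symm

end RootedGraph

namespace RootedGraph

variable {V : Type*} (R : RootedGraph V)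

lemma descCount_const (htree : R.G.IsAcyclic)
    (hs : ∀ n : ℕ, ∀ x ∈ R.sphere n, ∀ y ∈ R.sphere n,
      {w : V | R.G.Adj x w ∧ w ∈ R.sphere (n + 1)}.ncard =
      {w : V | R.G.Adj y w ∧ w ∈ R.sphere (n + 1)}.ncard) :
    ∀ k n : ℕ, ∀ x y : V, x ∈ R.sphere n → y ∈ R.sphere n →
      R.descCount n k x = R.descCount n k y := by
  intro k
  induction k with
  | zero =>
    intro n x y hx hy
    rw [R.descCount_zero hx, R.descCount_zero hy]
  | succ k ih =>
    intro n x y hx hy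
    rw [R.descCount_succ htree hx, R.descCount_succ htree hy]
    by_cases hne : ∃ c₀, c₀ ∈ R.sphere (n + 1)
    · obtain ⟨c₀, hc₀⟩ := hne
      have key : ∀ z : V, z ∈ R.sphere n →
          Nat.card (Σ c : {c : V // c ∈ R.sphere (n + 1) ∧ R.par c = z},
            {w : V // w ∈ R.sphere (n + 1 + k) ∧ R.par^[k] w = c.1}) =
          Nat.card {c : V // c ∈ R.sphere (n + 1) ∧ R.par c = z} *
            R.descCount (n + 1) k c₀ := by
        intro z hz
        haveI : Finite {c : V // c ∈ R.sphere (n + 1) ∧ R.par c = z} := R.desc_finite _ _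
        haveI : Fintype {c : V // c ∈ R.sphere (n + 1) ∧ R.par c = z} := Fintype.ofFinite _
        haveI : ∀ c : {c : V // c ∈ R.sphere (n + 1) ∧ R.par c = z},
            Finite {w : V // w ∈ R.sphere (n + 1 + k) ∧ R.par^[k] w = c.1} :=
          fun _ => R.desc_finite _ _
        haveI : ∀ c : {c : V // c ∈ R.sphere (n + 1) ∧ R.par c = z},
            Fintype {w : V // w ∈ R.sphere (n + 1 + k) ∧ R.par^[k] w = c.1} :=
          fun _ => Fintype.ofFinite _
        rw [Nat.card_eq_fintype_card, Fintype.card_sigma]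
        have hterm : ∀ c : {c : V // c ∈ R.sphere (n + 1) ∧ R.par c = z},
            Fintype.card {w : V // w ∈ R.sphere (n + 1 + k) ∧ R.par^[k] w = c.1} =
            R.descCount (n + 1) k c₀ := by
          intro c
          rw [← Nat.card_eq_fintype_card]
          exact ih (n + 1) c.1 c₀ c.2.1 hc₀
        rw [Finset.sum_congr rfl (fun c _ => hterm c), Finset.sum_const, smul_eq_mul,
          Finset.card_univ, Nat.card_eq_fintype_card]
      rw [key x hx, key y hy, R.childCard htree hx, R.childCard htree hy, hs n x hx y hy]
    · have hempty : ∀ z : V, IsEmpty (Σ c : {c : V // c ∈ R.sphere (n + 1) ∧ R.par c = z},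
          {w : V // w ∈ R.sphere (n + 1 + k) ∧ R.par^[k] w = c.1}) := by
        intro z
        constructor
        rintro ⟨c, -⟩
        exact hne ⟨c.1, c.2.1⟩
      rw [@Nat.card_of_isEmpty _ (hempty x), @Nat.card_of_isEmpty _ (hempty y)]

lemma tailedF_zero (htree : R.G.IsAcyclic) {n : ℕ} (k : ℕ) {x y : V} (hy : y ∈ R.sphere n) :
    R.tailedFCount n k x y = 0 := by
  have : IsEmpty {p : ℕ → V // R.IsForwardPath n k x (p (2*k)) p ∧ R.G.Adj (p (2*k)) y} := by
    constructor
    rintro ⟨p, hp, hadj⟩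
    have hmem : p (2*k) ∈ R.sphere n :=
      R.sphere_cast (by omega) (hp.2.2.2.2 (2*k) (by omega) le_rfl)
    exact R.no_adj_same htree hmem hy hadj
  exact Nat.card_of_isEmpty

lemma headedF_zero (htree : R.G.IsAcyclic) {n : ℕ} (k : ℕ) {x y : V} (hx : x ∈ R.sphere n) :
    R.headedFCount n k x y = 0 := by
  have : IsEmpty {p : ℕ → V // R.G.Adj x (p 0) ∧ R.IsForwardPath n k (p 0) y p} := by
    constructor
    rintro ⟨p, hadj, hp⟩
    have hmem : p 0 ∈ R.sphere n :=
      R.sphere_cast (by omega) (hp.2.2.2.1 0 (by omega))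
    exact R.no_adj_same htree hx hmem hadj
  exact Nat.card_of_isEmpty

lemma tailedB_zero (htree : R.G.IsAcyclic) {n : ℕ} (k : ℕ) {x y : V} (hy : y ∈ R.sphere n) :
    R.tailedBCount n k x y = 0 := by
  have : IsEmpty {p : ℕ → V // R.IsBackwardPath n k x (p (2*k)) p ∧ R.G.Adj (p (2*k)) y} := by
    constructor
    rintro ⟨p, hp, hadj⟩
    have hmem : p (2*k) ∈ R.sphere n :=
      R.sphere_cast (by omega) (hp.2.2.2.2.2 (2*k) (by omega) le_rfl)
    exact R.no_adj_same htree hmem hy hadj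
  exact Nat.card_of_isEmpty

lemma headedB_zero (htree : R.G.IsAcyclic) {n : ℕ} (k : ℕ) {x y : V} (hx : x ∈ R.sphere n) :
    R.headedBCount n k x y = 0 := by
  have : IsEmpty {p : ℕ → V // R.G.Adj x (p 0) ∧ R.IsBackwardPath n k (p 0) y p} := by
    constructor
    rintro ⟨p, hadj, hp⟩
    have hmem : p 0 ∈ R.sphere n :=
      R.sphere_cast (by omega) (hp.2.2.2.2.1 0 (by omega))
    exact R.no_adj_same htree hx hmem hadj
  exact Nat.card_of_isEmpty

end RootedGraph

/-- a rooted tree is path commuting iff it is spherically symmetric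
(equal number of forward neighbors across each sphere). -/
theorem stmt5 {V : Type*} (R : RootedGraph V) (htree : R.G.IsAcyclic) :
    R.PathCommuting ↔
    ∀ n : ℕ, ∀ x ∈ R.sphere n, ∀ y ∈ R.sphere n,
      {w : V | R.G.Adj x w ∧ w ∈ R.sphere (n + 1)}.ncard =
      {w : V | R.G.Adj y w ∧ w ∈ R.sphere (n + 1)}.ncard := by
  constructor
  · intro hpc n x hx y hy
    have h := (hpc n x hx y hy 1 n).1
    rw [R.fbCount_eq htree 1 n hx hy, R.bfCount_eq htree n 1 hx hy] at h
    have hcond : n ≤ n ∧ R.par^[n] x = R.par^[n] y :=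
      ⟨le_rfl, by rw [R.parIter_root hx, R.parIter_root hy]⟩
    rw [if_pos hcond] at h
    rw [← R.descCount_one htree hx, ← R.descCount_one htree hy]
    omega
  · intro hs n x hx y hy k l
    refine ⟨?_, ?_, ?_⟩
    · rw [R.fbCount_eq htree k l hx hy, R.bfCount_eq htree l k hx hy,
        R.descCount_const htree hs k n x y hx hy]
      exact mul_comm _ _
    · rw [R.tailedF_zero htree k hy, R.headedF_zero htree k hx]
    · rw [R.tailedB_zero htree k hy, R.headedB_zero htree k hx]
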